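/- If the pair (C, A) is output-stable, then it is also a-output-stable and the gramian inequality G^a <= G holds, where G = sum_{v in F_d} A^{v^T *} C* C A^v is the noncommutative observability gramian and G^a = sum_{n in Z_+^d} (n!/|n|!) || sum_{v: a(v)=n} C A^v x ||^2 defines the abelianized gramian via <G^a x, x>. In particular, for every x, sum_{n} (n!/|n|!) || sum_{v: a(v)=n} C A^v x ||^2 <= sum_{v in F_d} || C A^v x ||^2. -/

import Mathlib

open ContinuousLinearMap

noncomputable section

variable {X Y : Type*}
  [NormedAddCommGroup X] [InnerProductSpace ℂ X] [CompleteSpace X]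
  [NormedAddCommGroup Y] [InnerProductSpace ℂ Y] [CompleteSpace Y]

/-- `A^v`: for a word `v = i_N … i_1` (stored as the list `[i_N, …, i_1]`), the
product `A_{i_N} ∘ A_{i_{N-1}} ∘ ⋯ ∘ A_{i_1}`. -/
def wordProd {d : ℕ} (A : Fin d → X →L[ℂ] X) (v : List (Fin d)) : X →L[ℂ] X :=
  (v.map A).prod

/-- `A^w` for a word of length `N` encoded as a function `w : Fin N → Fin d`. -/
def funProd {d N : ℕ} (A : Fin d → X →L[ℂ] X) (w : Fin N → Fin d) : X →L[ℂ] X :=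
  wordProd A (List.ofFn w)

/-- The weight `n!/|n|!` attached to a multi-index `n`. -/
def wt {d : ℕ} (n : Fin d → ℕ) : ℝ :=
  ((∏ i, Nat.factorial (n i) : ℕ) : ℝ) / ((Nat.factorial (∑ i, n i) : ℕ) : ℝ)

/-- The finite set of words of length `|n|` (encoded as functions `Fin |n| → Fin d`)
whose abelianization is the multi-index `n`. -/
def abWords {d : ℕ} (n : Fin d → ℕ) : Finset (Fin (∑ i, n i) → Fin d) :=
  Finset.univ.filter fun w => ∀ i, (List.ofFn w).count i = n i

lemma count_ofFn_eq {N d : ℕ} (w : Fin N → Fin d) (i : Fin d) :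
    (List.ofFn w).count i = Fintype.card {a // w a = i} := by
  rw [Fintype.card_subtype]
  induction N with
  | zero => simp
  | succ m ih =>
    rw [List.ofFn_succ, List.count_cons, ih (fun a => w a.succ),
      Fin.card_filter_univ_succ' (fun a => w a = i)]
    by_cases h : w 0 = i <;> simp [h] <;> omega

lemma wt_nonneg {d : ℕ} (n : Fin d → ℕ) : 0 ≤ wt n := by
  unfold wt; positivity

lemma card_abWords_mul_le {d : ℕ} (n : Fin d → ℕ) :
    (abWords n).card * ∏ i, Nat.factorial (n i) ≤ Nat.factorial (∑ i, n i) := by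
  classical
  set N := ∑ i, n i with hN
  rcases (abWords n).eq_empty_or_nonempty with h | ⟨w₀, hw₀⟩
  · simp [h]
  · have hmem : ∀ w ∈ abWords n, ∀ i, Fintype.card {a // w a = i} = n i := by
      intro w hw i
      rw [← count_ofFn_eq]
      exact (Finset.mem_filter.mp hw).2 i
    have hmap : ∀ g : Equiv.Perm (Fin N), w₀ ∘ g ∈ abWords n := by
      intro g
      refine Finset.mem_filter.mpr ⟨Finset.mem_univ _, fun i => ?_⟩
      rw [count_ofFn_eq]
      calc Fintype.card {a // (w₀ ∘ g) a = i}
          = Fintype.card {a // w₀ a = i} :=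
            Fintype.card_congr (g.subtypeEquiv fun a => Iff.rfl)
        _ = n i := hmem w₀ hw₀ i
    have key : ∀ w ∈ abWords n, (∏ i, Nat.factorial (n i)) ≤
        (Finset.univ.filter fun g : Equiv.Perm (Fin N) => w₀ ∘ g = w).card := by
      intro w hw
      have hfib : ∀ i, Fintype.card {a // w a = i} = Fintype.card {a // w₀ a = i} := by
        intro i; rw [hmem w hw i, hmem w₀ hw₀ i]
      let e : Fin N ≃ Fin N :=
        Equiv.ofFiberEquiv (f := w) (g := w₀) (fun i => Fintype.equivOfCardEq (hfib i))
      have he : ∀ a, w₀ (e a) = w a := fun a => Equiv.ofFiberEquiv_map _ a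
      have hstab : (Finset.univ.filter fun g : Equiv.Perm (Fin N) => w₀ ∘ g = w₀).card
          = ∏ i, Nat.factorial (n i) := by
        rw [← Fintype.card_subtype, DomMulAct.stabilizer_card]
        exact Finset.prod_congr rfl fun i _ => by rw [hmem w₀ hw₀ i]
      rw [← hstab]
      apply Finset.card_le_card_of_injOn (fun g => g * (e : Equiv.Perm (Fin N)))
      · intro g hg
        simp only [Finset.mem_coe, Finset.mem_filter, Finset.mem_univ, true_and] at hg ⊢
        funext a
        have : w₀ (g (e a)) = w₀ (e a) := congrFun hg (e a)
        simpa [Function.comp, he a] using this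
      · intro g1 _ g2 _ hgg
        exact mul_right_cancel hgg
    calc (abWords n).card * ∏ i, Nat.factorial (n i)
        = ∑ _w ∈ abWords n, ∏ i, Nat.factorial (n i) := by
          rw [Finset.sum_const, smul_eq_mul]
      _ ≤ ∑ w ∈ abWords n,
            (Finset.univ.filter fun g : Equiv.Perm (Fin N) => w₀ ∘ g = w).card :=
          Finset.sum_le_sum key
      _ = (Finset.univ : Finset (Equiv.Perm (Fin N))).card :=
          (Finset.card_eq_sum_card_fiberwise (fun g _ => hmap g)).symm
      _ = Nat.factorial N := by
          rw [Finset.card_univ, Fintype.card_perm, Fintype.card_fin]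

/-- Output stability implies a-output stability together with the gramian inequality:
for each x, ∑_n (n!/|n|!) ‖∑_{v ∈ a⁻¹(n)} C A^v x‖² converges and is at most
∑_v ‖C A^v x‖². -/
theorem stmt11 {d : ℕ} (A : Fin d → X →L[ℂ] X) (C : X →L[ℂ] Y)
    (hstable : ∀ x : X, Summable fun v : List (Fin d) => ‖C (wordProd A v x)‖ ^ 2) :
    ∀ x : X,
      Summable (fun n : Fin d → ℕ =>
        wt n * ‖∑ v ∈ abWords n, C (funProd A v x)‖ ^ 2) ∧
      (∑' n : Fin d → ℕ, wt n * ‖∑ v ∈ abWords n, C (funProd A v x)‖ ^ 2)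
        ≤ ∑' v : List (Fin d), ‖C (wordProd A v x)‖ ^ 2 := by
  classical
  intro x
  set f : List (Fin d) → ℝ := fun v => ‖C (wordProd A v x)‖ ^ 2 with hfdef
  have hf0 : ∀ v, 0 ≤ f v := fun v => pow_nonneg (norm_nonneg _) 2
  set ι : (Σ n : Fin d → ℕ, {w // w ∈ abWords n}) → List (Fin d) :=
    fun p => List.ofFn p.2.1 with hιdef
  have hι : Function.Injective ι := by
    rintro ⟨n, w, hw⟩ ⟨m, u, hu⟩ hh
    have h : List.ofFn w = List.ofFn u := hh
    have hnm : n = m := by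
      funext i
      have h1 := (Finset.mem_filter.mp hw).2 i
      have h2 := (Finset.mem_filter.mp hu).2 i
      rw [← h1, ← h2, h]
    subst hnm
    exact congrArg (fun s => (⟨n, s⟩ : Σ n : Fin d → ℕ, {w // w ∈ abWords n}))
      (Subtype.ext (List.ofFn_injective h))
  have hg : Summable fun p => f (ι p) := (hstable x).comp_injective hι
  have hgval : ∀ (n : Fin d → ℕ) (w : {w // w ∈ abWords n}),
      f (ι ⟨n, w⟩) = ‖C (funProd A w.1 x)‖ ^ 2 := fun n w => rfl
  set S : (Fin d → ℕ) → ℝ := fun n => ∑ v ∈ abWords n, ‖C (funProd A v x)‖ ^ 2 with hSdef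
  have hS0 : ∀ n, 0 ≤ S n := fun n =>
    Finset.sum_nonneg fun v _ => pow_nonneg (norm_nonneg _) 2
  have hfiber : ∀ n : Fin d → ℕ, (∑' w : {w // w ∈ abWords n}, f (ι ⟨n, w⟩)) = S n := by
    intro n
    simp only [hgval]
    exact Finset.tsum_subtype (abWords n) (fun v => ‖C (funProd A v x)‖ ^ 2)
  have hSsum : Summable S := by
    have := hg.sigma
    simpa only [hfiber] using this
  have step : ∀ n : Fin d → ℕ,
      wt n * ‖∑ v ∈ abWords n, C (funProd A v x)‖ ^ 2 ≤ S n := by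
    intro n
    have h1 : ‖∑ v ∈ abWords n, C (funProd A v x)‖ ^ 2
        ≤ ((abWords n).card : ℝ) * S n := by
      calc ‖∑ v ∈ abWords n, C (funProd A v x)‖ ^ 2
          ≤ (∑ v ∈ abWords n, ‖C (funProd A v x)‖) ^ 2 :=
            pow_le_pow_left₀ (norm_nonneg _) (norm_sum_le _ _) 2
        _ ≤ ((abWords n).card : ℝ) * S n := sq_sum_le_card_mul_sum_sq
    have hfacpos : (0 : ℝ) < (Nat.factorial (∑ i, n i) : ℝ) := by
      exact_mod_cast Nat.factorial_pos _
    have hwt : wt n * ((abWords n).card : ℝ) ≤ 1 := by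
      rw [wt, div_mul_eq_mul_div, div_le_one hfacpos]
      rw [mul_comm]
      exact_mod_cast card_abWords_mul_le n
    calc wt n * ‖∑ v ∈ abWords n, C (funProd A v x)‖ ^ 2
        ≤ wt n * (((abWords n).card : ℝ) * S n) :=
          mul_le_mul_of_nonneg_left h1 (wt_nonneg n)
      _ = (wt n * ((abWords n).card : ℝ)) * S n := by ring
      _ ≤ 1 * S n := mul_le_mul_of_nonneg_right hwt (hS0 n)
      _ = S n := one_mul _
  have hT : Summable (fun n : Fin d → ℕ =>
      wt n * ‖∑ v ∈ abWords n, C (funProd A v x)‖ ^ 2) :=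
    Summable.of_nonneg_of_le
      (fun n => mul_nonneg (wt_nonneg n) (pow_nonneg (norm_nonneg _) 2)) step hSsum
  refine ⟨hT, ?_⟩
  calc (∑' n : Fin d → ℕ, wt n * ‖∑ v ∈ abWords n, C (funProd A v x)‖ ^ 2)
      ≤ ∑' n, S n := Summable.tsum_le_tsum step hT hSsum
    _ = ∑' p, f (ι p) := by
        rw [Summable.tsum_sigma hg]
        exact tsum_congr fun n => (hfiber n).symm
    _ ≤ ∑' v : List (Fin d), ‖C (wordProd A v x)‖ ^ 2 :=
        Summable.tsum_le_tsum_of_inj ι hι (fun v _ => hf0 v) (fun p => le_rfl) hg (hstable x)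

end
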